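/- (Lemma 5.2) In the two-solution simultaneous greedy round-robin process for an agent with a normalized non-negative submodular objective f and a p-system constraint I against n − 1 other agents, let S₁, S₂ be the final sets, let x_r denote the r-th item added overall, τ(r) ∈ {1,2} the index of the solution to which x_r was added, and S_t^(r) (t ∈ {1,2}) the two sets just before x_r was added. Let O ∈ I be contained in the items available at the agent's first turn, and let Z = {x ∈ O : f(x | S₁) < 0 and f(x | S₂) < 0}. Then there exists a map δ : O \ Z → S₁ ∪ S₂ such that: (1) if δ(x) = x_r then f(x | S_t^(r)) ≤ f(x_r | S_{τ(r)}^(r)) for both t ∈ {1,2}; and (2) |δ⁻¹(x_r)| ≤ n + p for every x_r ∈ S₁ ∪ S₂. -/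

import Mathlib

open Finset

/-- A set function on subsets of a finite ground set is submodular if the marginal value of any
item with respect to a smaller set is at least its marginal value with respect to a larger set. -/
def Submodular {α : Type*} [DecidableEq α] (f : Finset α → ℝ) : Prop :=
  ∀ ⦃S T : Finset α⦄, S ⊆ T → ∀ ⦃x : α⦄, x ∉ T →
    f (insert x T) - f T ≤ f (insert x S) - f S

/-- `A` is a basis of `S` w.r.t. the independence predicate `Indep`:
a maximal independent subset of `S`. -/
def IsBasisIn {α : Type*} [DecidableEq α] (Indep : Finset α → Prop) (S A : Finset α) : Prop :=
  A ⊆ S ∧ Indep A ∧ ∀ x ∈ S, x ∉ A → ¬ Indep (insert x A)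

/-- In the two-solution simultaneous greedy process, `sol2 pick slot t r` is solution `t` just
before the agent's `r`-th pick: the items among the first `r` picks assigned to slot `t`. -/
def sol2 {α : Type*} [DecidableEq α] (pick : ℕ → α) (slot : ℕ → Fin 2) (t : Fin 2) (r : ℕ) :
    Finset α :=
  ((Finset.range r).filter fun j => slot j = t).image pick

/-- Any independent subset of `S` extends to a basis of `S`. -/
lemma exists_basis_containing {α : Type*} [DecidableEq α] (Indep : Finset α → Prop)
    (S C : Finset α) (hCS : C ⊆ S) (hC : Indep C) :
    ∃ B, C ⊆ B ∧ IsBasisIn Indep S B := by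
  classical
  obtain ⟨B, hB, hBmax⟩ := Finset.exists_max_image
    (S.powerset.filter fun B => C ⊆ B ∧ Indep B) Finset.card
    ⟨C, by simp only [Finset.mem_filter, Finset.mem_powerset]; exact ⟨hCS, subset_rfl, hC⟩⟩
  rw [Finset.mem_filter, Finset.mem_powerset] at hB
  refine ⟨B, hB.2.1, hB.1, hB.2.2, ?_⟩
  intro x hxS hxB hI
  have hmem : insert x B ∈ S.powerset.filter fun B => C ⊆ B ∧ Indep B := by
    rw [Finset.mem_filter, Finset.mem_powerset]
    exact ⟨Finset.insert_subset hxS hB.1, hB.2.1.trans (Finset.subset_insert _ _), hI⟩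
  have hle := hBmax _ hmem
  rw [Finset.card_insert_of_notMem hxB] at hle
  omega

theorem stmt_11 {α : Type*} [DecidableEq α] [Fintype α]
    (f : Finset α → ℝ) (Indep : Finset α → Prop) (p : ℝ) (n : ℕ)
    (hn : 1 ≤ n) (hp : 1 ≤ p)
    (hnorm : f ∅ = 0)
    (hnonneg : ∀ S : Finset α, 0 ≤ f S)
    (hsub : Submodular f)
    (hempty : Indep ∅)
    (hdown : ∀ ⦃X Y : Finset α⦄, X ⊆ Y → Indep Y → Indep X)
    (hPsys : ∀ S A B : Finset α, IsBasisIn Indep S A → IsBasisIn Indep S B →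
      (B.card : ℝ) ≤ p * (A.card : ℝ))
    (s : ℕ) (pick : ℕ → α) (slot : ℕ → Fin 2) (avail : ℕ → Finset α)
    (hmem : ∀ r < s, pick r ∈ avail r)
    (hfeas : ∀ r < s, Indep (insert (pick r) (sol2 pick slot (slot r) r)))
    (hgreedy : ∀ r < s, ∀ x ∈ avail r, ∀ t : Fin 2, Indep (insert x (sol2 pick slot t r)) →
      f (insert x (sol2 pick slot t r)) - f (sol2 pick slot t r) ≤
        f (insert (pick r) (sol2 pick slot (slot r) r)) - f (sol2 pick slot (slot r) r))
    (hrem : ∀ r < s, avail (r + 1) ⊆ (avail r).erase (pick r))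
    (hbound : ∀ r < s, (avail r \ avail (r + 1)).card ≤ n)
    (hstop : ∀ x ∈ avail s, ∀ t : Fin 2, ¬ Indep (insert x (sol2 pick slot t s)))
    (O : Finset α) (hO : Indep O) (hOavail : O ⊆ avail 0) :
    ∀ S₁ S₂ : Finset α, S₁ = sol2 pick slot 0 s → S₂ = sol2 pick slot 1 s →
    ∀ OZ : Finset α,
      OZ = O.filter (fun x => 0 ≤ f (insert x S₁) - f S₁ ∨ 0 ≤ f (insert x S₂) - f S₂) →
    ∃ δ : α → α,
      (∀ x ∈ OZ, δ x ∈ S₁ ∪ S₂) ∧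
      (∀ x ∈ OZ, ∀ r < s, δ x = pick r → ∀ t : Fin 2,
        f (insert x (sol2 pick slot t r)) - f (sol2 pick slot t r) ≤
          f (insert (pick r) (sol2 pick slot (slot r) r)) - f (sol2 pick slot (slot r) r)) ∧
      (∀ r < s, ((OZ.filter (fun x => δ x = pick r)).card : ℝ) ≤ (n : ℝ) + p) := by
  classical
  intro S₁ S₂ hS₁ hS₂ OZ hOZ
  have h01 : ∀ u : Fin 2, u = 0 ∨ u = 1 := by decide
  have hOZO : ∀ x ∈ OZ, x ∈ O := by
    intro x hx; rw [hOZ] at hx; exact (mem_filter.mp hx).1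
  -- availability is antitone up to step s
  have havail : ∀ j ≤ s, ∀ i ≤ j, avail j ⊆ avail i := by
    intro j
    induction j with
    | zero =>
      intro _ i hi
      obtain rfl : i = 0 := Nat.le_zero.mp hi
      exact subset_rfl
    | succ m ih =>
      intro hjs i hi
      rcases Nat.lt_or_ge i (m + 1) with h | h
      · exact (hrem m (by omega)).trans ((erase_subset _ _).trans (ih (by omega) i (by omega)))
      · obtain rfl : i = m + 1 := by omega
        exact subset_rfl
  -- picks are pairwise distinct
  have hpick_ne : ∀ i j, i < j → j < s → pick i ≠ pick j := by
    intro i j hij hjs hEq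
    have h1 : pick j ∈ avail (i + 1) := havail j (by omega) (i + 1) (by omega) (hmem j hjs)
    have h2 : pick j ∈ (avail i).erase (pick i) := hrem i (by omega) h1
    exact (mem_erase.mp h2).1 hEq.symm
  have hpickinj : ∀ i j, i < s → j < s → pick i = pick j → i = j := by
    intro i j hi hj hEq
    rcases lt_trichotomy i j with h | h | h
    · exact absurd hEq (hpick_ne i j h hj)
    · exact h
    · exact absurd hEq.symm (hpick_ne j i h hi)
  -- sol2 is monotone in r
  have hsolmono : ∀ (t : Fin 2) {r r' : ℕ}, r ≤ r' → sol2 pick slot t r ⊆ sol2 pick slot t r' := by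
    intro t r r' h
    exact image_subset_image (filter_subset_filter _ (range_subset_range.mpr h))
  have hsol_succ : ∀ (t : Fin 2) (j : ℕ), sol2 pick slot t (j + 1) =
      if slot j = t then insert (pick j) (sol2 pick slot t j) else sol2 pick slot t j := by
    intro t j
    unfold sol2
    rw [range_add_one, filter_insert]
    split
    · rw [image_insert]
    · rfl
  have hsolindep : ∀ (t : Fin 2), ∀ r ≤ s, Indep (sol2 pick slot t r) := by
    intro t r
    induction r with
    | zero => intro _; simpa [sol2] using hempty
    | succ m ih =>
      intro hms
      rw [hsol_succ t m]
      split
      · next h =>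
        subst h
        exact hfeas m (by omega)
      · exact ih (by omega)
  have hpickmem : ∀ j < s, pick j ∈ sol2 pick slot (slot j) s := by
    intro j hj
    exact mem_image.mpr ⟨j, mem_filter.mpr ⟨mem_range.mpr hj, rfl⟩, rfl⟩
  -- q x: the last step (≤ s) at which x is still available
  obtain ⟨q, hqle, hqavail, hqnot⟩ :
      ∃ q : α → ℕ, (∀ x, q x ≤ s) ∧ (∀ x, x ∈ avail 0 → ∀ j ≤ q x, x ∈ avail j) ∧
        (∀ x, ∀ r ≤ s, q x < r → x ∉ avail r) := by
    have hqex : ∀ x : α, ∃ j, j = s ∨ (j < s ∧ x ∉ avail (j + 1)) := fun x => ⟨s, Or.inl rfl⟩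
    refine ⟨fun x => Nat.find (hqex x), fun x => Nat.find_le (Or.inl rfl), ?_, ?_⟩
    · intro x hx0 j hj
      have hj' : j ≤ Nat.find (hqex x) := hj
      rcases j with _ | m
      · exact hx0
      · have hms : m < Nat.find (hqex x) := by omega
        have hmin := Nat.find_min (hqex x) hms
        push_neg at hmin
        have hle : Nat.find (hqex x) ≤ s := Nat.find_le (Or.inl rfl)
        exact hmin.2 (by omega)
    · intro x r hrs hqr
      have hqr' : Nat.find (hqex x) < r := hqr
      rcases Nat.find_spec (hqex x) with h | h
      · omega
      · intro hx
        exact h.2 (havail r hrs (Nat.find (hqex x) + 1) (by omega) hx)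
  -- e x: the first step at which x is infeasible for one of the two solutions
  obtain ⟨e, hele, hegood, hebad⟩ :
      ∃ e : α → ℕ, (∀ x, e x ≤ s + 1) ∧
        (∀ x, ∀ j < e x,
          Indep (insert x (sol2 pick slot 0 j)) ∧ Indep (insert x (sol2 pick slot 1 j))) ∧
        (∀ x, e x ≤ s → (¬ Indep (insert x (sol2 pick slot 0 (e x))) ∨
          ¬ Indep (insert x (sol2 pick slot 1 (e x))))) := by
    have heex : ∀ x : α, ∃ r, r = s + 1 ∨ (r ≤ s ∧ (¬ Indep (insert x (sol2 pick slot 0 r)) ∨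
        ¬ Indep (insert x (sol2 pick slot 1 r)))) := fun x => ⟨s + 1, Or.inl rfl⟩
    refine ⟨fun x => Nat.find (heex x), fun x => Nat.find_le (Or.inl rfl), ?_, ?_⟩
    · intro x j hj
      have hj' : j < Nat.find (heex x) := hj
      have hmin := Nat.find_min (heex x) hj'
      push_neg at hmin
      have hle : Nat.find (heex x) ≤ s + 1 := Nat.find_le (Or.inl rfl)
      exact hmin.2 (by omega)
    · intro x hxs
      have hxs' : Nat.find (heex x) ≤ s := hxs
      rcases Nat.find_spec (heex x) with h | h
      · omega
      · exact h.2
  have hbadmono : ∀ (x : α) (t : Fin 2) {r r' : ℕ}, r ≤ r' →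
      ¬ Indep (insert x (sol2 pick slot t r)) → ¬ Indep (insert x (sol2 pick slot t r')) := by
    intro x t r r' h hb hI
    exact hb (hdown (insert_subset_insert x (hsolmono t h)) hI)
  have hepos : ∀ x ∈ O, 1 ≤ e x := by
    intro x hxO
    by_contra hcon
    have h0 : e x = 0 := by omega
    have hb := hebad x (by omega)
    rw [h0] at hb
    have hsol0 : ∀ t : Fin 2, sol2 pick slot t 0 = (∅ : Finset α) := by
      intro t; simp [sol2]
    have hins : ∀ t : Fin 2, Indep (insert x (sol2 pick slot t 0)) := by
      intro t
      rw [hsol0 t]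
      refine hdown ?_ hO
      simp [insert_subset_iff, hxO]
    rcases hb with hb | hb
    · exact hb (hins 0)
    · exact hb (hins 1)
  have hdlt : ∀ x ∈ OZ, min (q x) (e x - 1) < s := by
    intro x hx
    have hxO := hOZO x hx
    by_contra hcon
    push_neg at hcon
    have hq : s ≤ q x := le_trans hcon (min_le_left _ _)
    have hxs : x ∈ avail s := hqavail x (hOavail hxO) s hq
    have hbs : ¬ Indep (insert x (sol2 pick slot 0 s)) := hstop x hxs 0
    have hes : e x ≤ s := by
      by_contra hc2
      push_neg at hc2
      exact hbs (hegood x s hc2).1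
    have h1 := hepos x hxO
    have h2 : s ≤ e x - 1 := le_trans hcon (min_le_right _ _)
    omega
  have hcpos : 0 < n + ⌊p⌋₊ := by omega
  -- THE COUNTING LEMMA
  have hcount : ∀ r ≤ s, (OZ.filter fun x => min (q x) (e x - 1) < r).card ≤ r * (n + ⌊p⌋₊) := by
    intro r hrs
    -- removed elements, other than the picks themselves
    have hUncard : ((range r).biUnion fun j => ((avail j \ avail (j + 1)).erase (pick j))).card ≤
        r * (n - 1) := by
      refine le_trans card_biUnion_le ?_
      calc ∑ j ∈ range r, ((avail j \ avail (j + 1)).erase (pick j)).card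
          ≤ ∑ _j ∈ range r, (n - 1) := by
            refine sum_le_sum ?_
            intro j hj
            have hjr : j < s := lt_of_lt_of_le (mem_range.mp hj) hrs
            have hpj : pick j ∈ avail j \ avail (j + 1) := by
              refine mem_sdiff.mpr ⟨hmem j hjr, fun h => ?_⟩
              exact (mem_erase.mp (hrem j hjr h)).1 rfl
            rw [card_erase_of_mem hpj]
            exact Nat.sub_le_sub_right (hbound j hjr) 1
        _ = r * (n - 1) := by rw [sum_const, card_range, smul_eq_mul]
    -- blocked elements + picks in O, per slot
    have hTP : ∀ t : Fin 2,
        ((((O.filter fun y => ¬ Indep (insert y (sol2 pick slot t r))) \ ((range r).image pick))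
          ∪ (O ∩ sol2 pick slot t r)).card : ℝ) ≤ p * ((sol2 pick slot t r).card : ℝ) := by
      intro t
      set T := (O.filter fun y => ¬ Indep (insert y (sol2 pick slot t r))) \
        ((range r).image pick) with hTdef
      have hbasisA : IsBasisIn Indep (sol2 pick slot t r ∪ T) (sol2 pick slot t r) := by
        refine ⟨subset_union_left, hsolindep t r hrs, ?_⟩
        intro y hy hyA
        rcases mem_union.mp hy with h | h
        · exact absurd h hyA
        · exact (mem_filter.mp (mem_sdiff.mp h).1).2
      have hCS : T ∪ (O ∩ sol2 pick slot t r) ⊆ sol2 pick slot t r ∪ T :=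
        union_subset subset_union_right (inter_subset_right.trans subset_union_left)
      have hCO : T ∪ (O ∩ sol2 pick slot t r) ⊆ O :=
        union_subset (sdiff_subset.trans (filter_subset _ _)) inter_subset_left
      obtain ⟨B, hCB, hBbasis⟩ := exists_basis_containing Indep _ _ hCS (hdown hCO hO)
      have h1 : (T ∪ (O ∩ sol2 pick slot t r)).card ≤ B.card := card_le_card hCB
      calc ((T ∪ (O ∩ sol2 pick slot t r)).card : ℝ) ≤ (B.card : ℝ) := by exact_mod_cast h1
        _ ≤ p * ((sol2 pick slot t r).card : ℝ) := hPsys _ _ _ hbasisA hBbasis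
    -- the two solutions before step r partition the first r picks
    have hsum : (sol2 pick slot 0 r).card + (sol2 pick slot 1 r).card = r := by
      have hinj : ∀ t : Fin 2,
          (sol2 pick slot t r).card = ((range r).filter fun j => slot j = t).card := by
        intro t
        apply card_image_of_injOn
        intro i hi j hj hEq
        have hi2 := Finset.mem_coe.mp hi
        have hj2 := Finset.mem_coe.mp hj
        have hi' : i < r := mem_range.mp (mem_filter.mp hi2).1
        have hj' : j < r := mem_range.mp (mem_filter.mp hj2).1
        exact hpickinj i j (by omega) (by omega) hEq
      have hQ : ((range r).filter fun j => ¬ slot j = 0) =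
          ((range r).filter fun j => slot j = 1) := by
        ext j
        simp only [mem_filter]
        constructor
        · rintro ⟨hj, hnj⟩
          refine ⟨hj, ?_⟩
          rcases h01 (slot j) with h | h
          · exact absurd h hnj
          · exact h
        · rintro ⟨hj, h1⟩
          refine ⟨hj, ?_⟩
          rw [h1]
          decide
      have hpn := Finset.card_filter_add_card_filter_not
        (s := range r) (p := fun j => slot j = 0)
      rw [hinj 0, hinj 1, ← hQ]
      rw [card_range] at hpn
      exact hpn
    -- every counted element lands in one of the pieces
    have hsub1 : OZ.filter (fun x => min (q x) (e x - 1) < r) ⊆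
        ((range r).biUnion fun j => ((avail j \ avail (j + 1)).erase (pick j)))
        ∪ ((((O.filter fun y => ¬ Indep (insert y (sol2 pick slot 0 r))) \
              ((range r).image pick)) ∪ (O ∩ sol2 pick slot 0 r))
           ∪ (((O.filter fun y => ¬ Indep (insert y (sol2 pick slot 1 r))) \
              ((range r).image pick)) ∪ (O ∩ sol2 pick slot 1 r))) := by
      intro x hx
      rw [mem_filter] at hx
      obtain ⟨hxOZ, hxd⟩ := hx
      have hxO : x ∈ O := hOZO x hxOZ
      by_cases hpk : x ∈ (range r).image pick
      · rw [mem_image] at hpk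
        obtain ⟨j, hj, hpj⟩ := hpk
        rw [mem_range] at hj
        have hmemsol : x ∈ sol2 pick slot (slot j) r :=
          mem_image.mpr ⟨j, mem_filter.mpr ⟨mem_range.mpr hj, rfl⟩, hpj⟩
        refine mem_union.mpr (Or.inr ?_)
        rcases h01 (slot j) with h | h
        · rw [h] at hmemsol
          exact mem_union.mpr (Or.inl (mem_union.mpr (Or.inr (mem_inter.mpr ⟨hxO, hmemsol⟩))))
        · rw [h] at hmemsol
          exact mem_union.mpr (Or.inr (mem_union.mpr (Or.inr (mem_inter.mpr ⟨hxO, hmemsol⟩))))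
      · by_cases hav : x ∈ avail r
        · have hqr : r ≤ q x := by
            by_contra hc
            push_neg at hc
            exact hqnot x r hrs hc hav
          have her : e x ≤ r := by omega
          have hb := hebad x (le_trans her hrs)
          refine mem_union.mpr (Or.inr ?_)
          rcases hb with hb | hb
          · exact mem_union.mpr (Or.inl (mem_union.mpr (Or.inl (mem_sdiff.mpr
              ⟨mem_filter.mpr ⟨hxO, hbadmono x 0 her hb⟩, hpk⟩))))
          · exact mem_union.mpr (Or.inr (mem_union.mpr (Or.inl (mem_sdiff.mpr
              ⟨mem_filter.mpr ⟨hxO, hbadmono x 1 her hb⟩, hpk⟩))))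
        · have hqr : q x < r := by
            by_contra hc
            push_neg at hc
            exact hav (hqavail x (hOavail hxO) r hc)
          refine mem_union.mpr (Or.inl (mem_biUnion.mpr ⟨q x, mem_range.mpr hqr, ?_⟩))
          refine mem_erase.mpr ⟨?_, mem_sdiff.mpr ⟨hqavail x (hOavail hxO) (q x) le_rfl,
            hqnot x (q x + 1) (by omega) (by omega)⟩⟩
          intro hEq
          exact hpk (mem_image.mpr ⟨q x, mem_range.mpr hqr, hEq.symm⟩)
    -- assemble
    have hnat : (OZ.filter fun x => min (q x) (e x - 1) < r).card ≤
        ((range r).biUnion fun j => ((avail j \ avail (j + 1)).erase (pick j))).card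
        + (((((O.filter fun y => ¬ Indep (insert y (sol2 pick slot 0 r))) \
              ((range r).image pick)) ∪ (O ∩ sol2 pick slot 0 r)).card)
           + ((((O.filter fun y => ¬ Indep (insert y (sol2 pick slot 1 r))) \
              ((range r).image pick)) ∪ (O ∩ sol2 pick slot 1 r)).card)) := by
      refine le_trans (card_le_card hsub1) (le_trans (card_union_le _ _) ?_)
      exact Nat.add_le_add_left (card_union_le _ _) _
    have hreal : ((OZ.filter fun x => min (q x) (e x - 1) < r).card : ℝ) ≤
        (r : ℝ) * ((n : ℝ) + (⌊p⌋₊ : ℝ)) := by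
      have h0 : ((OZ.filter fun x => min (q x) (e x - 1) < r).card : ℝ) ≤ _ :=
        Nat.cast_le.mpr hnat
      push_cast at h0
      have hU : ((((range r).biUnion fun j =>
          ((avail j \ avail (j + 1)).erase (pick j))).card : ℝ)) ≤ (r : ℝ) * ((n : ℝ) - 1) := by
        calc ((((range r).biUnion fun j =>
              ((avail j \ avail (j + 1)).erase (pick j))).card : ℝ))
            ≤ ((r * (n - 1) : ℕ) : ℝ) := by exact_mod_cast hUncard
          _ = (r : ℝ) * ((n : ℝ) - 1) := by
            push_cast [Nat.cast_sub hn]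
            ring
      have hsum' : ((sol2 pick slot 0 r).card : ℝ) + ((sol2 pick slot 1 r).card : ℝ) = (r : ℝ) := by
        exact_mod_cast hsum
      have hfl : p ≤ (⌊p⌋₊ : ℝ) + 1 := (Nat.lt_floor_add_one p).le
      have hT0 := hTP 0
      have hT1 := hTP 1
      have hpc : p * ((sol2 pick slot 0 r).card : ℝ) + p * ((sol2 pick slot 1 r).card : ℝ)
          = p * (r : ℝ) := by rw [← hsum']; ring
      have hpr : p * (r : ℝ) ≤ ((⌊p⌋₊ : ℝ) + 1) * (r : ℝ) :=
        mul_le_mul_of_nonneg_right hfl (Nat.cast_nonneg r)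
      nlinarith [h0, hU, hT0, hT1, hpc, hpr]
    have hfin : ((OZ.filter fun x => min (q x) (e x - 1) < r).card : ℝ) ≤
        ((r * (n + ⌊p⌋₊) : ℕ) : ℝ) := by
      push_cast
      linarith [hreal]
    exact_mod_cast hfin
  -- an injective labelling of the elements
  obtain ⟨M, ι, hιlt, hιinj⟩ : ∃ (M : ℕ) (ι : α → ℕ), (∀ x, ι x < M) ∧
      (∀ a b : α, ι a = ι b → a = b) :=
    ⟨Fintype.card α + 1, fun x => ((Fintype.equivFin α) x : ℕ),
      fun x => Nat.lt_succ_of_lt (Fin.is_lt _),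
      fun a b h => (Fintype.equivFin α).injective (Fin.val_injective h)⟩
  obtain ⟨key, hkeydef⟩ : ∃ key : α → ℕ, ∀ x, key x = ι x + (min (q x) (e x - 1)) * M :=
    ⟨_, fun _ => rfl⟩
  obtain ⟨rank, hrankdef⟩ : ∃ rank : α → ℕ, ∀ x,
      rank x = (OZ.filter fun y => key y < key x).card := ⟨_, fun _ => rfl⟩
  have hkd : ∀ x y : α, key y < key x → min (q y) (e y - 1) ≤ min (q x) (e x - 1) := by
    intro x y hlt
    by_contra hc
    push_neg at hc
    have h1 : key x < key y := by
      rw [hkeydef, hkeydef]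
      have hx := hιlt x
      have h2 : (min (q x) (e x - 1) + 1) * M ≤ (min (q y) (e y - 1)) * M :=
        Nat.mul_le_mul_right _ (by omega)
      have h3 : (min (q x) (e x - 1) + 1) * M = min (q x) (e x - 1) * M + M := by ring
      omega
    omega
  have hkeyinj : ∀ x y : α, key x = key y → x = y := by
    intro x y hEq
    have h1 : key x % M = ι x := by
      rw [hkeydef, Nat.add_mul_mod_self_right, Nat.mod_eq_of_lt (hιlt x)]
    have h2 : key y % M = ι y := by
      rw [hkeydef, Nat.add_mul_mod_self_right, Nat.mod_eq_of_lt (hιlt y)]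
    exact hιinj x y (by rw [← h1, ← h2, hEq])
  have hrankmono : ∀ x ∈ OZ, ∀ (y : α), key x < key y → rank x < rank y := by
    intro x hx y hlt
    rw [hrankdef, hrankdef]
    apply card_lt_card
    have hsubk : (OZ.filter fun z => key z < key x) ⊆ (OZ.filter fun z => key z < key y) := by
      intro z hz
      rw [mem_filter] at hz ⊢
      exact ⟨hz.1, lt_trans hz.2 hlt⟩
    rw [Finset.ssubset_iff_of_subset hsubk]
    exact ⟨x, mem_filter.mpr ⟨hx, hlt⟩, fun hmem2 => lt_irrefl _ (mem_filter.mp hmem2).2⟩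
  have hrankinj : ∀ x ∈ OZ, ∀ y ∈ OZ, rank x = rank y → x = y := by
    intro x hx y hy hEq
    rcases lt_trichotomy (key x) (key y) with h | h | h
    · exact absurd hEq (Nat.ne_of_lt (hrankmono x hx y h))
    · exact hkeyinj x y h
    · exact absurd hEq.symm (Nat.ne_of_lt (hrankmono y hy x h))
  have hgle : ∀ x ∈ OZ, rank x / (n + ⌊p⌋₊) ≤ min (q x) (e x - 1) := by
    intro x hx
    have hlt : rank x < (min (q x) (e x - 1) + 1) * (n + ⌊p⌋₊) := by
      have hsubk : (OZ.filter fun y => key y < key x) ⊆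
          OZ.filter fun y => min (q y) (e y - 1) < min (q x) (e x - 1) + 1 := by
        intro y hy
        rw [mem_filter] at hy ⊢
        exact ⟨hy.1, by have := hkd x y hy.2; omega⟩
      have hproper : (OZ.filter fun y => key y < key x) ⊂
          OZ.filter fun y => min (q y) (e y - 1) < min (q x) (e x - 1) + 1 := by
        rw [Finset.ssubset_iff_of_subset hsubk]
        exact ⟨x, mem_filter.mpr ⟨hx, by omega⟩,
          fun hmem2 => lt_irrefl _ (mem_filter.mp hmem2).2⟩
      calc rank x = (OZ.filter fun y => key y < key x).card := hrankdef x
        _ < (OZ.filter fun y => min (q y) (e y - 1) < min (q x) (e x - 1) + 1).card :=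
            card_lt_card hproper
        _ ≤ (min (q x) (e x - 1) + 1) * (n + ⌊p⌋₊) :=
            hcount _ (by have := hdlt x hx; omega)
    have := (Nat.div_lt_iff_lt_mul hcpos).mpr hlt
    omega
  have hfib : ∀ r : ℕ, (OZ.filter fun x => rank x / (n + ⌊p⌋₊) = r).card ≤ n + ⌊p⌋₊ := by
    intro r
    have hmaps : ∀ x ∈ OZ.filter (fun x => rank x / (n + ⌊p⌋₊) = r),
        rank x ∈ Finset.Ico (r * (n + ⌊p⌋₊)) (r * (n + ⌊p⌋₊) + (n + ⌊p⌋₊)) := by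
      intro x hx
      rw [mem_filter] at hx
      rw [mem_Ico]
      constructor
      · calc r * (n + ⌊p⌋₊) = rank x / (n + ⌊p⌋₊) * (n + ⌊p⌋₊) := by rw [hx.2]
          _ ≤ rank x := Nat.div_mul_le_self _ _
      · have hmod : rank x % (n + ⌊p⌋₊) < n + ⌊p⌋₊ := Nat.mod_lt _ hcpos
        have hdm := Nat.div_add_mod (rank x) (n + ⌊p⌋₊)
        calc rank x = (n + ⌊p⌋₊) * (rank x / (n + ⌊p⌋₊)) + rank x % (n + ⌊p⌋₊) := hdm.symm
          _ < (n + ⌊p⌋₊) * (rank x / (n + ⌊p⌋₊)) + (n + ⌊p⌋₊) := Nat.add_lt_add_left hmod _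
          _ = r * (n + ⌊p⌋₊) + (n + ⌊p⌋₊) := by rw [hx.2, Nat.mul_comm]
    have hinj2 : Set.InjOn rank ↑(OZ.filter fun x => rank x / (n + ⌊p⌋₊) = r) := by
      intro x hx y hy hxy
      exact hrankinj x (mem_filter.mp (Finset.mem_coe.mp hx)).1
        y (mem_filter.mp (Finset.mem_coe.mp hy)).1 hxy
    have hle2 := Finset.card_le_card_of_injOn rank hmaps hinj2
    rw [Nat.card_Ico] at hle2
    omega
  -- the map δ
  refine ⟨fun x => pick (rank x / (n + ⌊p⌋₊)), ?_, ?_, ?_⟩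
  · -- δ x ∈ S₁ ∪ S₂
    intro x hx
    have hgs : rank x / (n + ⌊p⌋₊) < s := lt_of_le_of_lt (hgle x hx) (hdlt x hx)
    have hmem' := hpickmem (rank x / (n + ⌊p⌋₊)) hgs
    rw [hS₁, hS₂]
    rcases h01 (slot (rank x / (n + ⌊p⌋₊))) with h | h
    · rw [h] at hmem'
      exact mem_union.mpr (Or.inl hmem')
    · rw [h] at hmem'
      exact mem_union.mpr (Or.inr hmem')
  · -- greedy inequality
    intro x hx r hr hdelta t
    have hgs : rank x / (n + ⌊p⌋₊) < s := lt_of_le_of_lt (hgle x hx) (hdlt x hx)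
    have hrg : rank x / (n + ⌊p⌋₊) = r := hpickinj _ _ hgs hr hdelta
    subst hrg
    have hxO := hOZO x hx
    have hglt : rank x / (n + ⌊p⌋₊) < e x := by
      have h1 := hgle x hx
      have h2 := hepos x hxO
      have h3 : rank x / (n + ⌊p⌋₊) ≤ e x - 1 := le_trans h1 (min_le_right _ _)
      omega
    have hfeast := hegood x _ hglt
    have hxav : x ∈ avail (rank x / (n + ⌊p⌋₊)) :=
      hqavail x (hOavail hxO) _ (le_trans (hgle x hx) (min_le_left _ _))
    rcases h01 t with ht | ht
    · subst ht
      exact hgreedy _ hgs x hxav 0 hfeast.1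
    · subst ht
      exact hgreedy _ hgs x hxav 1 hfeast.2
  · -- the multiplicity bound
    intro r hr
    have hsubf : OZ.filter (fun x => pick (rank x / (n + ⌊p⌋₊)) = pick r) ⊆
        OZ.filter (fun x => rank x / (n + ⌊p⌋₊) = r) := by
      intro x hx
      rw [mem_filter] at hx ⊢
      refine ⟨hx.1, ?_⟩
      have hgs : rank x / (n + ⌊p⌋₊) < s := lt_of_le_of_lt (hgle x hx.1) (hdlt x hx.1)
      exact hpickinj _ _ hgs hr hx.2
    have h1 : (OZ.filter (fun x => pick (rank x / (n + ⌊p⌋₊)) = pick r)).card ≤ n + ⌊p⌋₊ :=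
      le_trans (card_le_card hsubf) (hfib r)
    have h2 : ((OZ.filter (fun x => pick (rank x / (n + ⌊p⌋₊)) = pick r)).card : ℝ) ≤
        ((n + ⌊p⌋₊ : ℕ) : ℝ) := by exact_mod_cast h1
    have h3 : ((n + ⌊p⌋₊ : ℕ) : ℝ) ≤ (n : ℝ) + p := by
      push_cast
      have := Nat.floor_le (le_trans zero_le_one hp)
      linarith
    exact h2.trans h3
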